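/- Let λ ≥ 0 and let φ, ψ : [0,∞) → ℝ be continuous at 0, with φ continuous on some interval [0,ε] (ε > 0) and ψ(0) ≤ φ(0). Define J_λ(t) := ∫₀ᵗ λ·e^(−λτ)·φ(τ) dτ + e^(−λt)·φ(t) and Q^λ_s := min{ inf_{t ∈ [0,s]} J_λ(t), ∫₀ˢ λ·e^(−λτ)·φ(τ) dτ + e^(−λs)·ψ(s) }. Then lim_{s → 0⁺} Q^λ_s = ψ(0). (This is the trajectory-wise form of the corollary that the discounted state-action safety value Q^λ_s(x,u) converges to the discounted safety value V^λ(x) as the duration s tends to zero.) -/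

import Mathlib

/-- **Q^λ_s converges to V^λ as the duration s tends to zero (trajectory-wise form).**
Let `λ ≥ 0` and `φ ψ : [0,∞) → ℝ` be continuous at `0`, with `φ` continuous on some
`[0,ε]` (`ε > 0`) and `ψ(0) ≤ φ(0)`. With
`J_λ(t) = ∫₀ᵗ λ·e^(−λτ)·φ(τ) dτ + e^(−λt)·φ(t)` and
`Q^λ_s = min { inf_{t ∈ [0,s]} J_λ(t), ∫₀ˢ λ·e^(−λτ)·φ(τ) dτ + e^(−λs)·ψ(s) }`,
we have `lim_{s → 0⁺} Q^λ_s = ψ(0)`. -/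
theorem discounted_state_action_value_tendsto_value
    (lam ε : ℝ) (hlam : 0 ≤ lam) (hε : 0 < ε) (φ ψ : ℝ → ℝ)
    (hφ : ContinuousOn φ (Set.Icc 0 ε))
    (hφ0 : ContinuousWithinAt φ (Set.Ici 0) 0)
    (hψ0 : ContinuousWithinAt ψ (Set.Ici 0) 0)
    (h0 : ψ 0 ≤ φ 0)
    (J : ℝ → ℝ)
    (hJ : ∀ t, J t = (∫ τ in (0:ℝ)..t, lam * Real.exp (-(lam * τ)) * φ τ)
      + Real.exp (-(lam * t)) * φ t)
    (Q : ℝ → ℝ)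
    (hQ : ∀ s, Q s = min (sInf (J '' Set.Icc 0 s))
      ((∫ τ in (0:ℝ)..s, lam * Real.exp (-(lam * τ)) * φ τ)
        + Real.exp (-(lam * s)) * ψ s)) :
    Filter.Tendsto Q (nhdsWithin 0 (Set.Ioi 0)) (nhds (ψ 0)) := by
  set f : ℝ → ℝ := fun τ => lam * Real.exp (-(lam * τ)) * φ τ with hf
  have hfc : ContinuousOn f (Set.Icc 0 ε) := by
    apply ContinuousOn.mul _ hφ
    exact (Continuous.continuousOn (by continuity))
  obtain ⟨M, hM⟩ := (isCompact_Icc).exists_bound_of_continuousOn hfc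
  have hint : ∀ t ∈ Set.Icc (0:ℝ) ε, |∫ τ in (0:ℝ)..t, f τ| ≤ M * t := by
    intro t ht
    have h := intervalIntegral.norm_integral_le_of_norm_le_const (f := f) (a := 0) (b := t)
      (C := M) (fun x hx => by
        rw [Set.uIoc_of_le ht.1] at hx
        exact hM x ⟨le_of_lt hx.1, le_trans hx.2 ht.2⟩)
    simpa [abs_of_nonneg ht.1] using h
  have hMt : Filter.Tendsto (fun t : ℝ => M * t) (nhdsWithin 0 (Set.Ici 0)) (nhds 0) := by
    have : Filter.Tendsto (fun t : ℝ => M * t) (nhds 0) (nhds 0) := by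
      exact (continuous_const.mul continuous_id).tendsto' (0 : ℝ) 0 (by simp)
    exact this.mono_left nhdsWithin_le_nhds
  have hIte : Filter.Tendsto (fun t => ∫ τ in (0:ℝ)..t, f τ)
      (nhdsWithin 0 (Set.Ici 0)) (nhds 0) := by
    apply squeeze_zero_norm' _ hMt
    filter_upwards [Icc_mem_nhdsGE hε] with t ht
    simpa using hint t ht
  have hexp : Filter.Tendsto (fun t : ℝ => Real.exp (-(lam * t)))
      (nhdsWithin 0 (Set.Ici 0)) (nhds 1) := by
    have : Filter.Tendsto (fun t : ℝ => Real.exp (-(lam * t))) (nhds 0)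
        (nhds (Real.exp (-(lam * 0)))) := (by continuity : Continuous fun t : ℝ =>
          Real.exp (-(lam * t))).tendsto 0
    simpa using this.mono_left nhdsWithin_le_nhds
  have hJt : Filter.Tendsto J (nhdsWithin 0 (Set.Ici 0)) (nhds (φ 0)) := by
    have : Filter.Tendsto (fun t => (∫ τ in (0:ℝ)..t, f τ) + Real.exp (-(lam * t)) * φ t)
        (nhdsWithin 0 (Set.Ici 0)) (nhds (0 + 1 * φ 0)) :=
      hIte.add (hexp.mul hφ0)
    simpa [← hJ] using this
  have hBt : Filter.Tendsto
      (fun s => (∫ τ in (0:ℝ)..s, f τ) + Real.exp (-(lam * s)) * ψ s)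
      (nhdsWithin 0 (Set.Ioi 0)) (nhds (ψ 0)) := by
    have : Filter.Tendsto (fun s => (∫ τ in (0:ℝ)..s, f τ) + Real.exp (-(lam * s)) * ψ s)
        (nhdsWithin 0 (Set.Ici 0)) (nhds (0 + 1 * ψ 0)) :=
      hIte.add (hexp.mul hψ0)
    simpa using this.mono_left (nhdsWithin_mono 0 Set.Ioi_subset_Ici_self)
  rw [tendsto_order]
  constructor
  · intro a ha
    set a' := (a + ψ 0) / 2 with ha'
    have haa' : a < a' := by simp [ha']; linarith
    have ha'ψ : a' < ψ 0 := by simp [ha']; linarith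
    have ha'φ : a' < φ 0 := lt_of_lt_of_le ha'ψ h0
    have hJev : ∀ᶠ t in nhdsWithin 0 (Set.Ici 0), a' < J t :=
      hJt.eventually (eventually_gt_nhds ha'φ)
    obtain ⟨δ, hδ, hδJ⟩ := Metric.mem_nhdsWithin_iff.1 hJev
    have hBev : ∀ᶠ s in nhdsWithin 0 (Set.Ioi 0),
        a < (∫ τ in (0:ℝ)..s, f τ) + Real.exp (-(lam * s)) * ψ s :=
      hBt.eventually (eventually_gt_nhds ha)
    filter_upwards [hBev, Ioo_mem_nhdsGT hδ] with s hB hs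
    rw [hQ s, lt_min_iff]
    refine ⟨lt_of_lt_of_le haa' ?_, hB⟩
    have hne : (J '' Set.Icc 0 s).Nonempty :=
      ⟨J 0, Set.mem_image_of_mem J (Set.mem_Icc.2 ⟨le_refl 0, le_of_lt hs.1⟩)⟩
    apply le_csInf hne
    rintro b ⟨t, ht, rfl⟩
    have hball : t ∈ Metric.ball (0:ℝ) δ := by
      simp only [Metric.mem_ball, Real.dist_eq, sub_zero]
      rw [abs_of_nonneg ht.1]
      exact lt_of_le_of_lt ht.2 hs.2
    have : a' < J t := hδJ (Set.mem_inter hball ht.1)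
    linarith
  · intro b hb
    have hBev : ∀ᶠ s in nhdsWithin 0 (Set.Ioi 0),
        (∫ τ in (0:ℝ)..s, f τ) + Real.exp (-(lam * s)) * ψ s < b :=
      hBt.eventually (eventually_lt_nhds hb)
    filter_upwards [hBev] with s hB
    rw [hQ s]
    exact lt_of_le_of_lt (min_le_right _ _) hB
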